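/- arXiv:2310.07538 — 3 statements merged into one kernel-verified Lean document; each statement's English description precedes it below -/
import Mathlib

section
/- Let A ⊂ ℝⁿ be H^s measurable with H^s(A) < ∞. Then the upper s-density θ^{*s}(A,x) = limsup_{r→0} (2r)^{−s} H^s(A ∩ B(x,r)) is at most 1 for H^s almost every x ∈ A. -/
open MeasureTheory Metric Filter
open scoped ENNReal Topology MeasureTheory

theorem core {n : ℕ} (s : ℝ) (hs : 0 ≤ s) (A : Set (EuclideanSpace ℝ (Fin n)))
    (hA : MeasurableSet A) (hfin : μH[s] A < ⊤) (t : ℝ≥0∞) (ht1 : 1 < t) (htop : t ≠ ⊤) :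
    μH[s] (A ∩ {x | t < limsup (fun r : ℝ =>
          μH[s] (A ∩ closedBall x r) / ENNReal.ofReal ((2 * r) ^ s)) (𝓝[>] 0)}) = 0 := by
  set L : EuclideanSpace ℝ (Fin n) → ℝ≥0∞ := fun x => limsup (fun r : ℝ =>
          μH[s] (A ∩ closedBall x r) / ENNReal.ofReal ((2 * r) ^ s)) (𝓝[>] 0) with hL
  set E : Set (EuclideanSpace ℝ (Fin n)) := A ∩ {x | t < L x} with hE
  set μ : Measure (EuclideanSpace ℝ (Fin n)) := μH[s].restrict A with hμ
  have hfinμ : IsFiniteMeasure μ := ⟨by rwa [Measure.restrict_apply_univ]⟩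
  have hμapp : ∀ S : Set (EuclideanSpace ℝ (Fin n)), μ S = μH[s] (S ∩ A) :=
    fun S => Measure.restrict_apply' hA
  have hEA : E ⊆ A := Set.inter_subset_left
  have hμE : μ E = μH[s] E := by rw [hμapp, Set.inter_eq_left.2 hEA]
  have hEfin : μH[s] E < ⊤ := lt_of_le_of_lt (measure_mono hEA) hfin
  have key : ∀ ε : ℝ≥0∞, 0 < ε → t * μH[s] E ≤ μH[s] E + ε := by
    intro ε hε
    obtain ⟨U, hEU, hUopen, hUlt⟩ := Set.exists_isOpen_lt_of_lt E (μ E + ε)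
      (ENNReal.lt_add_right (hμE ▸ hEfin).ne hε.ne')
    have hRex : ∀ x ∈ E, ∃ ρ : ℝ, 0 < ρ ∧ closedBall x ρ ⊆ U := by
      intro x hx
      rcases Metric.isOpen_iff.1 hUopen x (hEU hx) with ⟨ρ, hρ, hball⟩
      exact ⟨ρ/2, half_pos hρ, (closedBall_subset_ball (half_lt_self hρ)).trans hball⟩
    classical
    set R : EuclideanSpace ℝ (Fin n) → ℝ :=
      fun x => if h : x ∈ E then (hRex x h).choose else 1 with hR
    have hRpos : ∀ x ∈ E, 0 < R x := by
      intro x hx; rw [hR]; simp only [dif_pos hx]; exact (hRex x hx).choose_spec.1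
    have hRsub : ∀ x ∈ E, closedBall x (R x) ⊆ U := by
      intro x hx; rw [hR]; simp only [dif_pos hx]; exact (hRex x hx).choose_spec.2
    set f : EuclideanSpace ℝ (Fin n) → Set ℝ := fun x => {r | 0 < r ∧
      t * ENNReal.ofReal ((2 * r) ^ s) < μH[s] (A ∩ closedBall x r)} with hf
    have hfreq : ∀ x ∈ E, ∀ δ > (0:ℝ), (f x ∩ Set.Ioo 0 δ).Nonempty := by
      intro x hx δ hδ
      have hx2 : t < L x := hx.2
      have hfr : ∃ᶠ r in 𝓝[>] (0:ℝ),
          t < μH[s] (A ∩ closedBall x r) / ENNReal.ofReal ((2 * r) ^ s) :=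
        frequently_lt_of_lt_limsup (by isBoundedDefault) hx2
      obtain ⟨r, hr1, hr2⟩ := (hfr.and_eventually
        (Ioo_mem_nhdsGT_of_mem ⟨le_rfl, hδ⟩)).exists
      refine ⟨r, ⟨hr2.1, ?_⟩, hr2⟩
      have h2r : (0:ℝ) < (2*r)^s := Real.rpow_pos_of_pos (by linarith [hr2.1]) s
      rw [ENNReal.lt_div_iff_mul_lt (Or.inl (ENNReal.ofReal_pos.2 h2r).ne')
        (Or.inl ENNReal.ofReal_ne_top)] at hr1
      exact hr1
    have hBes : ∀ m : ℕ, ∃ (T : Set (EuclideanSpace ℝ (Fin n)))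
        (r : EuclideanSpace ℝ (Fin n) → ℝ), T.Countable ∧ T ⊆ E ∧
        (∀ x ∈ T, r x ∈ f x ∩ Set.Ioo 0 (min (R x) (1/(m+1)))) ∧
        μ (E \ ⋃ x ∈ T, closedBall x (r x)) = 0 ∧
        T.PairwiseDisjoint fun x => closedBall x (r x) := by
      intro m
      exact Besicovitch.exists_disjoint_closedBall_covering_ae μ f E hfreq
        (fun x => min (R x) (1/(m+1)))
        (fun x hx => lt_min (hRpos x hx) (by positivity))
    choose T r hTc hTE hTmem hTnull hTdisj using hBes
    set N : Set (EuclideanSpace ℝ (Fin n)) :=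
      ⋃ m, (E \ ⋃ x ∈ T m, closedBall x (r m x)) with hN
    have hμN : μ N = 0 := by
      rw [hN]; exact measure_iUnion_null fun m => hTnull m
    have hHN : μH[s] (E ∩ N) = 0 := by
      have h1 : μH[s] (N ∩ A) = 0 := by rw [← hμapp, hμN]
      refine measure_mono_null ?_ h1
      intro x hx
      exact ⟨hx.2, hEA hx.1⟩
    -- the covered part
    have hcov : ∀ m : ℕ, (E \ N) ⊆ ⋃ (i : T m), closedBall (i : EuclideanSpace ℝ (Fin n)) (r m i) := by
      intro m x hx
      have : x ∉ E \ ⋃ x ∈ T m, closedBall x (r m x) := fun h => hx.2 (Set.mem_iUnion.2 ⟨m, h⟩)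
      have hxmem : x ∈ ⋃ y ∈ T m, closedBall y (r m y) := by
        by_contra hc; exact this ⟨hx.1, hc⟩
      rcases Set.mem_iUnion₂.1 hxmem with ⟨y, hy, hxy⟩
      exact Set.mem_iUnion.2 ⟨⟨y, hy⟩, hxy⟩
    haveI : ∀ m : ℕ, Countable (T m) := fun m => (hTc m).to_subtype
    have hdiam : ∀ m : ℕ, ∀ i : T m,
        EMetric.diam (closedBall (i : EuclideanSpace ℝ (Fin n)) (r m i)) ≤
          ENNReal.ofReal (2 * (1/(m+1))) := by
      intro m i
      have hri := hTmem m i i.2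
      have h1 : r m i ≤ 1/(m+1) := le_of_lt (lt_of_lt_of_le hri.2.2 (min_le_right _ _))
      have h0 : 0 ≤ r m i := hri.2.1.le
      calc EMetric.diam (closedBall (i : EuclideanSpace ℝ (Fin n)) (r m i))
          ≤ 2 * ENNReal.ofReal (r m i) := by
            rw [← Metric.emetric_closedBall (x := (i : EuclideanSpace ℝ (Fin n))) h0]
            exact EMetric.diam_closedBall
        _ ≤ ENNReal.ofReal (2 * (1/(m+1))) := by
            rw [ENNReal.ofReal_mul (by norm_num), ENNReal.ofReal_ofNat]
            exact mul_le_mul_right (ENNReal.ofReal_le_ofReal h1) 2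
    -- the sum bound
    have hsum : ∀ m : ℕ, ∑' i : T m,
        EMetric.diam (closedBall (i : EuclideanSpace ℝ (Fin n)) (r m i)) ^ s ≤ (μ E + ε) / t := by
      intro m
      have step1 : ∀ i : T m,
          EMetric.diam (closedBall (i : EuclideanSpace ℝ (Fin n)) (r m i)) ^ s ≤
            μ (closedBall (i : EuclideanSpace ℝ (Fin n)) (r m i)) / t := by
        intro i
        have hri := hTmem m i i.2
        have hrpos : 0 < r m i := hri.2.1
        have hd : EMetric.diam (closedBall (i : EuclideanSpace ℝ (Fin n)) (r m i)) ≤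
            ENNReal.ofReal (2 * r m i) := by
          rw [← Metric.emetric_closedBall (x := (i : EuclideanSpace ℝ (Fin n))) hrpos.le,
            ENNReal.ofReal_mul (by norm_num), ENNReal.ofReal_ofNat]
          exact EMetric.diam_closedBall
        calc EMetric.diam (closedBall (i : EuclideanSpace ℝ (Fin n)) (r m i)) ^ s
            ≤ ENNReal.ofReal (2 * r m i) ^ s := ENNReal.rpow_le_rpow hd hs
          _ = ENNReal.ofReal ((2 * r m i) ^ s) :=
              ENNReal.ofReal_rpow_of_pos (by linarith)
          _ ≤ μ (closedBall (i : EuclideanSpace ℝ (Fin n)) (r m i)) / t := by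
              rw [ENNReal.le_div_iff_mul_le (Or.inl (zero_lt_one.trans ht1).ne')
                (Or.inl htop), mul_comm]
              rw [hμapp, Set.inter_comm]
              exact hri.1.2.le
      calc ∑' i : T m, EMetric.diam (closedBall (i : EuclideanSpace ℝ (Fin n)) (r m i)) ^ s
          ≤ ∑' i : T m, μ (closedBall (i : EuclideanSpace ℝ (Fin n)) (r m i)) / t :=
            ENNReal.tsum_le_tsum step1
        _ = (∑' i : T m, μ (closedBall (i : EuclideanSpace ℝ (Fin n)) (r m i))) / t := by
            simp only [div_eq_mul_inv, ENNReal.tsum_mul_right]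
        _ = μ (⋃ i : T m, closedBall (i : EuclideanSpace ℝ (Fin n)) (r m i)) / t := by
            rw [measure_iUnion ?_ (fun i => measurableSet_closedBall)]
            · rintro ⟨i, hi⟩ ⟨j, hj⟩ hij
              exact hTdisj m hi hj (fun h => hij (Subtype.ext h))
        _ ≤ μ U / t := by
            refine ENNReal.div_le_div_right (measure_mono ?_) t
            refine Set.iUnion_subset fun i => ?_
            refine subset_trans (closedBall_subset_closedBall ?_) (hRsub i (hTE m i.2))
            exact le_of_lt (lt_of_lt_of_le (hTmem m i i.2).2.2 (min_le_left _ _))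
        _ ≤ (μ E + ε) / t := ENNReal.div_le_div_right hUlt.le t
    -- Hausdorff measure bound on E \ N
    have hmain : μH[s] (E \ N) ≤ (μ E + ε) / t := by
      have hr0 : Tendsto (fun m : ℕ => ENNReal.ofReal (2 * (1/(m+1)))) atTop (𝓝 0) := by
        rw [show (0:ℝ≥0∞) = ENNReal.ofReal 0 by simp]
        apply ENNReal.tendsto_ofReal
        have := tendsto_one_div_add_atTop_nhds_zero_nat (𝕜 := ℝ)
        simpa using this.const_mul 2
      have := Measure.hausdorffMeasure_le_liminf_tsum s (E \ N)
        (fun m : ℕ => ENNReal.ofReal (2 * (1/(m+1)))) hr0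
        (fun m (i : T m) => closedBall (i : EuclideanSpace ℝ (Fin n)) (r m i))
        (Eventually.of_forall hdiam) (Eventually.of_forall hcov)
      refine this.trans ?_
      refine liminf_le_of_le (by isBoundedDefault) ?_
      intro b hb
      obtain ⟨m, hm⟩ := hb.exists
      exact hm.trans (hsum m)
    -- conclude
    have hsplit : μH[s] E ≤ (μ E + ε) / t := by
      have : μH[s] E ≤ μH[s] (E \ N) + μH[s] (E ∩ N) := by
        refine le_trans (measure_mono ?_) (measure_union_le _ _)
        intro x hx
        by_cases h : x ∈ N
        · exact Or.inr ⟨hx, h⟩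
        · exact Or.inl ⟨hx, h⟩
      rw [hHN, add_zero] at this
      exact this.trans hmain
    calc t * μH[s] E ≤ t * ((μ E + ε) / t) := mul_le_mul_right hsplit t
      _ = μ E + ε := ENNReal.mul_div_cancel (zero_lt_one.trans ht1).ne' htop
      _ = μH[s] E + ε := by rw [hμE]
  -- finish
  have hle : t * μH[s] E ≤ μH[s] E := by
    refine ENNReal.le_of_forall_pos_le_add fun δ hδ _ => key δ (by exact_mod_cast hδ)
  by_contra h0
  have hne : μH[s] E ≠ 0 := h0
  have : t ≤ 1 := by
    have h1 : t * μH[s] E ≤ 1 * μH[s] E := by rwa [one_mul]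
    exact (ENNReal.mul_le_mul_iff_left hne hEfin.ne).1 h1
  exact absurd ht1 this.not_gt

/-- If `A ⊂ ℝⁿ` is `H^s` measurable with `H^s(A) < ∞`, then the upper `s`-density
`θ^{*s}(A,x) = limsup_{r→0} (2r)^{−s} H^s(A ∩ B(x,r))` is at most `1` for
`H^s` almost every `x ∈ A`. -/
theorem stmt6 {n : ℕ} (s : ℝ) (hs : 0 ≤ s) (A : Set (EuclideanSpace ℝ (Fin n)))
    (hA : MeasurableSet A) (hfin : μH[s] A < ⊤) :
    ∀ᵐ x ∂(μH[s].restrict A),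
      limsup (fun r : ℝ =>
          μH[s] (A ∩ closedBall x r) / ENNReal.ofReal ((2 * r) ^ s)) (𝓝[>] 0) ≤ 1 := by
  set L : EuclideanSpace ℝ (Fin n) → ℝ≥0∞ := fun x => limsup (fun r : ℝ =>
          μH[s] (A ∩ closedBall x r) / ENNReal.ofReal ((2 * r) ^ s)) (𝓝[>] 0) with hL
  rw [ae_iff]
  have hsub : {x | ¬ L x ≤ 1} ⊆ ⋃ k : ℕ, {x | (1 + (k+1 : ℝ≥0∞)⁻¹) < L x} := by
    intro x hx
    rw [Set.mem_setOf_eq, not_le] at hx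
    have htend : Tendsto (fun k : ℕ => 1 + ((k:ℝ≥0∞)+1)⁻¹) atTop (𝓝 1) := by
      have h1 : Tendsto (fun k : ℕ => ((k:ℝ≥0∞)+1)⁻¹) atTop (𝓝 0) :=
        ENNReal.tendsto_inv_nat_nhds_zero.comp (tendsto_add_atTop_nat 1) |>.congr (by simp)
      simpa using (tendsto_const_nhds (x := (1:ℝ≥0∞))).add h1
    obtain ⟨k, hk⟩ := (htend.eventually_lt_const hx).exists
    exact Set.mem_iUnion.2 ⟨k, by simpa using hk⟩
  refine measure_mono_null hsub ?_
  rw [measure_iUnion_null_iff]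
  intro k
  have h1 : (1:ℝ≥0∞) < 1 + ((k:ℝ≥0∞)+1)⁻¹ := by
    refine ENNReal.lt_add_right ENNReal.one_ne_top ?_
    simp [ENNReal.inv_ne_zero]
  have h2 : (1 + ((k:ℝ≥0∞)+1)⁻¹) ≠ ⊤ := by
    refine ENNReal.add_ne_top.2 ⟨ENNReal.one_ne_top, ?_⟩
    simp
  have := core s hs A hA hfin (1 + ((k:ℝ≥0∞)+1)⁻¹) h1 h2
  rw [Measure.restrict_apply' hA, Set.inter_comm]
  exact this
end

section
/- Let A ⊂ ℝⁿ be H^s measurable with 0 < H^s(A) < ∞ and s > m, let P : ℝⁿ → ℝᵐ be an orthogonal projection (linear surjection with P∘Pᵀ = id). Then for Lebesgue almost every u ∈ ℝᵐ, the Hausdorff dimension of the fiber P^{−1}{u} ∩ A is at most s − m. -/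
open MeasureTheory Metric Filter
open scoped ENNReal Topology MeasureTheory
open Set Classical
open scoped InnerProductSpace

lemma lip1 {n m : ℕ} (P : EuclideanSpace ℝ (Fin n) →L[ℝ] EuclideanSpace ℝ (Fin m))
    (hP : P ∘L ContinuousLinearMap.adjoint P
      = ContinuousLinearMap.id ℝ (EuclideanSpace ℝ (Fin m))) :
    LipschitzWith 1 ⇑P := by
  have hnorm : ∀ v, ‖ContinuousLinearMap.adjoint P v‖ = ‖v‖ := by
    intro v
    have : ⟪ContinuousLinearMap.adjoint P v, ContinuousLinearMap.adjoint P v⟫_ℝ = ⟪v, v⟫_ℝ := by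
      rw [ContinuousLinearMap.adjoint_inner_left]
      have := congrArg (fun T => T v) hP
      simp only [ContinuousLinearMap.comp_apply, ContinuousLinearMap.id_apply] at this
      rw [this]
    rw [real_inner_self_eq_norm_sq, real_inner_self_eq_norm_sq] at this
    nlinarith [norm_nonneg (ContinuousLinearMap.adjoint P v), norm_nonneg v]
  have h1 : ‖P‖ ≤ 1 := by
    rw [← (ContinuousLinearMap.adjoint :
      (EuclideanSpace ℝ (Fin n) →L[ℝ] EuclideanSpace ℝ (Fin m)) ≃ₗᵢ⋆[ℝ] _).norm_map P]
    exact ContinuousLinearMap.opNorm_le_bound _ zero_le_one (fun v => by rw [hnorm]; simp)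
  exact LipschitzWith.of_dist_le_mul fun x y => by
    rw [dist_eq_norm, dist_eq_norm, ← map_sub]
    calc ‖P (x - y)‖ ≤ ‖P‖ * ‖x - y‖ := P.le_opNorm _
    _ ≤ 1 * ‖x-y‖ := by gcongr

lemma mySlice {n m : ℕ} (t : ℝ) (ht : 0 < t)
    (A : Set (EuclideanSpace ℝ (Fin n)))
    (hA0 : μH[((m : ℝ) + t)] A = 0)
    (P : EuclideanSpace ℝ (Fin n) →L[ℝ] EuclideanSpace ℝ (Fin m))
    (hP : P ∘L ContinuousLinearMap.adjoint P
      = ContinuousLinearMap.id ℝ (EuclideanSpace ℝ (Fin m))) :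
    ∀ᵐ u ∂(volume : Measure (EuclideanSpace ℝ (Fin m))),
      μH[t] (P ⁻¹' {u} ∩ A) = 0 := by
  have hlip := lip1 P hP
  set d : ℝ := (m : ℝ) + t with hd
  have hd0 : 0 < d := by positivity
  -- extract good covers
  have key : ∀ k : ℕ, ∃ E : ℕ → Set (EuclideanSpace ℝ (Fin n)),
      (A ⊆ ⋃ i, E i) ∧ (∀ i, EMetric.diam (E i) ≤ ((k : ℝ≥0∞) + 1)⁻¹) ∧
      ∑' i, EMetric.diam (E i) ^ d ≤ 2⁻¹ ^ k := by
    intro k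
    rw [Measure.hausdorffMeasure_apply] at hA0
    have hr : (0 : ℝ≥0∞) < ((k : ℝ≥0∞) + 1)⁻¹ :=
      ENNReal.inv_pos.2 (ENNReal.add_ne_top.2 ⟨ENNReal.natCast_ne_top k, ENNReal.one_ne_top⟩)
    have h1 : (⨅ (E : ℕ → Set (EuclideanSpace ℝ (Fin n))) (_ : A ⊆ ⋃ i, E i)
        (_ : ∀ i, EMetric.diam (E i) ≤ ((k : ℝ≥0∞) + 1)⁻¹),
        ∑' i, ⨆ _ : (E i).Nonempty, EMetric.diam (E i) ^ d) = 0 := by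
      refine le_antisymm ?_ zero_le
      calc _ ≤ _ := le_iSup₂ (f := fun r (_ : 0 < r) =>
        ⨅ (E : ℕ → Set (EuclideanSpace ℝ (Fin n))) (_ : A ⊆ ⋃ i, E i)
          (_ : ∀ i, EMetric.diam (E i) ≤ r),
          ∑' i, ⨆ _ : (E i).Nonempty, EMetric.diam (E i) ^ d) _ hr
      _ = 0 := hA0
    have h2 : (⨅ (E : ℕ → Set (EuclideanSpace ℝ (Fin n))) (_ : A ⊆ ⋃ i, E i)
        (_ : ∀ i, EMetric.diam (E i) ≤ ((k : ℝ≥0∞) + 1)⁻¹),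
        ∑' i, ⨆ _ : (E i).Nonempty, EMetric.diam (E i) ^ d) < 2⁻¹ ^ k := by
      rw [h1]
      exact ENNReal.pow_pos (ENNReal.inv_pos.2 ENNReal.ofNat_ne_top) k
    simp only [iInf_lt_iff] at h2
    obtain ⟨E, hcov, hdiam, hsum⟩ := h2
    refine ⟨E, hcov, hdiam, ?_⟩
    refine le_trans (le_of_eq (tsum_congr fun i => ?_)) hsum.le
    rcases eq_empty_or_nonempty (E i) with h | h
    · simp [h, EMetric.diam, ENNReal.zero_rpow_of_pos hd0, hd0]
    · rw [iSup_pos h]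
  choose E hcov hdiam hsum using key
  -- the dominating functions
  set g : ℕ → EuclideanSpace ℝ (Fin m) → ℝ≥0∞ := fun k u =>
    ∑' i, (closure (P '' E k i)).indicator (fun _ => EMetric.diam (E k i) ^ t) u with hg
  have hmeas : ∀ k, Measurable (g k) := fun k =>
    Measurable.ennreal_tsum fun i =>
      measurable_const.indicator isClosed_closure.measurableSet
  set C : ℝ≥0∞ := volume (closedBall (0 : EuclideanSpace ℝ (Fin m)) 1) with hC
  have hCfin : C ≠ ∞ := measure_closedBall_lt_top.ne
  -- integral bound
  have hint : ∀ k, ∫⁻ u, g k u ≤ C * 2⁻¹ ^ k := by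
    intro k
    rw [hg]
    rw [lintegral_tsum fun i => ((measurable_const (a := EMetric.diam (E k i) ^ t)).indicator
      isClosed_closure.measurableSet).aemeasurable]
    have hterm : ∀ i, (∫⁻ u, (closure (P '' E k i)).indicator
        (fun _ => EMetric.diam (E k i) ^ t) u) ≤ C * EMetric.diam (E k i) ^ d := by
      intro i
      rw [lintegral_indicator isClosed_closure.measurableSet, setLIntegral_const]
      set D := EMetric.diam (E k i) with hD
      have hDfin : D ≠ ∞ :=
        ne_top_of_le_ne_top (ENNReal.inv_ne_top.2 (by simp)) (hdiam k i)
      rcases eq_empty_or_nonempty (E k i) with h | ⟨x₀, hx₀⟩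
      · simp [h]
      rcases eq_or_ne D 0 with h0 | h0
      · rw [h0, ENNReal.zero_rpow_of_pos ht, zero_mul]; exact zero_le
      -- closure (P '' E) ⊆ closedBall (P x₀) D.toReal
      have hsub : closure (P '' E k i) ⊆ closedBall (P x₀) D.toReal := by
        intro y hy
        have h1 : edist y (P x₀) ≤ D := by
          calc edist y (P x₀) ≤ EMetric.diam (closure (P '' E k i)) :=
            EMetric.edist_le_diam_of_mem hy (subset_closure ⟨x₀, hx₀, rfl⟩)
          _ = EMetric.diam (⇑P '' E k i) := EMetric.diam_closure _
          _ ≤ 1 * D := hlip.ediam_image_le _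
          _ = D := one_mul _
        rw [mem_closedBall, dist_edist]
        exact ENNReal.toReal_mono hDfin h1
      have hvol : volume (closure (P '' E k i)) ≤ D ^ (m : ℝ) * C := by
        calc volume (closure (P '' E k i)) ≤ volume (closedBall (P x₀) D.toReal) :=
          measure_mono hsub
        _ = ENNReal.ofReal (D.toReal ^ m) * C := by
          rw [Measure.addHaar_closedBall' volume _ ENNReal.toReal_nonneg,
            finrank_euclideanSpace_fin]
        _ = D ^ (m : ℝ) * C := by
          rw [ENNReal.ofReal_pow ENNReal.toReal_nonneg, ENNReal.ofReal_toReal hDfin,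
            ENNReal.rpow_natCast]
      calc D ^ t * volume (closure (P '' E k i)) ≤ D ^ t * (D ^ (m : ℝ) * C) := by gcongr
      _ = C * D ^ d := by
        rw [← mul_assoc, ← ENNReal.rpow_add _ _ h0 hDfin, hd, mul_comm, add_comm t]
    calc _ ≤ ∑' i, C * EMetric.diam (E k i) ^ d := ENNReal.tsum_le_tsum hterm
    _ = C * ∑' i, EMetric.diam (E k i) ^ d := ENNReal.tsum_mul_left
    _ ≤ C * 2⁻¹ ^ k := by gcongr; exact hsum k
  -- Fatou
  have hlim : Tendsto (fun k : ℕ => C * 2⁻¹ ^ k) atTop (𝓝 0) := by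
    have : Tendsto (fun k : ℕ => (2⁻¹ : ℝ≥0∞) ^ k) atTop (𝓝 0) :=
      ENNReal.tendsto_pow_atTop_nhds_zero_of_lt_one (by norm_num)
    simpa using ENNReal.Tendsto.const_mul this (Or.inr hCfin)
  have hliminf0 : ∫⁻ u, liminf (fun k => g k u) atTop = 0 := by
    refine le_antisymm ?_ zero_le
    calc _ ≤ liminf (fun k => ∫⁻ u, g k u) atTop := lintegral_liminf_le hmeas
    _ ≤ liminf (fun k : ℕ => C * 2⁻¹ ^ k) atTop := liminf_le_liminf (Eventually.of_forall hint)
    _ = 0 := hlim.liminf_eq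
  have hae : ∀ᵐ u ∂(volume : Measure (EuclideanSpace ℝ (Fin m))),
      liminf (fun k => g k u) atTop = 0 := by
    filter_upwards [(lintegral_eq_zero_iff (Measurable.liminf hmeas)).1 hliminf0] with u h
    simpa using h
  filter_upwards [hae] with u hu
  -- the pointwise bound
  refine le_antisymm ?_ zero_le
  rw [← hu]
  set T : ℕ → ℕ → Set (EuclideanSpace ℝ (Fin n)) := fun k i =>
    if u ∈ closure (P '' E k i) then E k i else ∅ with hT
  have hrt : Tendsto (fun k : ℕ => ((k : ℝ≥0∞) + 1)⁻¹) atTop (𝓝 0) := by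
    have h1 : Tendsto (fun k : ℕ => ((k : ℝ≥0∞))⁻¹) atTop (𝓝 0) :=
      ENNReal.tendsto_inv_nat_nhds_zero
    have h2 := h1.comp (tendsto_add_atTop_nat 1)
    convert h2 using 2 with k
    simp [Function.comp]
  have hbound := Measure.hausdorffMeasure_le_liminf_tsum t (P ⁻¹' {u} ∩ A)
    (l := atTop) (fun k : ℕ => ((k : ℝ≥0∞) + 1)⁻¹) hrt T
    (Eventually.of_forall fun k i => by
      have hTeq : T k i = if u ∈ closure (⇑P '' E k i) then E k i else ∅ := rfl
      rw [hTeq]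
      by_cases h : u ∈ closure (⇑P '' E k i)
      · rw [if_pos h]; exact hdiam k i
      · rw [if_neg h]; simp)
    (Eventually.of_forall fun k => by
      intro x hx
      obtain ⟨i, hi⟩ := mem_iUnion.1 (hcov k hx.2)
      refine mem_iUnion.2 ⟨i, ?_⟩
      have hu' : u ∈ closure (P '' E k i) := by
        have : P x = u := hx.1
        exact subset_closure ⟨x, hi, this⟩
      have hTeq : T k i = if u ∈ closure (⇑P '' E k i) then E k i else ∅ := rfl
      rw [hTeq, if_pos hu']
      exact hi)
  refine hbound.trans (liminf_le_liminf (Eventually.of_forall fun k => ?_))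
  refine ENNReal.tsum_le_tsum fun i => ?_
  have hTeq : T k i = if u ∈ closure (⇑P '' E k i) then E k i else ∅ := rfl
  rw [hTeq]
  by_cases h : u ∈ closure (⇑P '' E k i)
  · rw [if_pos h, indicator_of_mem h]; exact le_rfl
  · rw [if_neg h, indicator_of_notMem h, EMetric.diam_empty]
    exact le_of_eq (ENNReal.zero_rpow_of_pos ht)

/-- If `A ⊂ ℝⁿ` is `H^s` measurable with `0 < H^s(A) < ∞`, `s > m`, and
`P : ℝⁿ → ℝᵐ` is an orthogonal projection (`P ∘ Pᵀ = id`), then for Lebesgue almost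
every `u ∈ ℝᵐ` the fiber `P⁻¹{u} ∩ A` has Hausdorff dimension at most `s − m`. -/
theorem stmt7 {n m : ℕ} (s : ℝ) (hms : (m : ℝ) < s)
    (A : Set (EuclideanSpace ℝ (Fin n))) (hA : MeasurableSet A)
    (h0 : 0 < μH[s] A) (hfin : μH[s] A < ⊤)
    (P : EuclideanSpace ℝ (Fin n) →L[ℝ] EuclideanSpace ℝ (Fin m))
    (hP : P ∘L ContinuousLinearMap.adjoint P
      = ContinuousLinearMap.id ℝ (EuclideanSpace ℝ (Fin m))) :
    ∀ᵐ u ∂(volume : Measure (EuclideanSpace ℝ (Fin m))),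
      dimH (P ⁻¹' {u} ∩ A) ≤ ENNReal.ofReal (s - m) := by
  have hsm : 0 < s - (m : ℝ) := by linarith
  have key : ∀ q : {q : ℚ // s - m < (q : ℝ)},
      ∀ᵐ u ∂(volume : Measure (EuclideanSpace ℝ (Fin m))),
        dimH (P ⁻¹' {u} ∩ A) ≤ ENNReal.ofReal (q : ℝ) := by
    rintro ⟨q, hq⟩
    have ht : 0 < (q : ℝ) := by linarith
    have hA0 : μH[((m : ℝ) + (q : ℝ))] A = 0 := by
      rcases Measure.hausdorffMeasure_zero_or_top (show s < (m : ℝ) + q by linarith) A with h | h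
      · exact h
      · exact absurd h hfin.ne
    filter_upwards [mySlice (q : ℝ) ht A hA0 P hP] with u hu
    refine dimH_le fun d' hd' => ?_
    rcases le_or_gt ((d' : ℝ)) (q : ℝ) with h | h
    · calc (d' : ℝ≥0∞) = ENNReal.ofReal ((d' : ℝ)) := (ENNReal.ofReal_coe_nnreal).symm
      _ ≤ ENNReal.ofReal (q : ℝ) := ENNReal.ofReal_le_ofReal h
    · rcases Measure.hausdorffMeasure_zero_or_top h (P ⁻¹' {u} ∩ A) with h2 | h2
      · rw [h2] at hd'; exact absurd hd' (by simp)
      · rw [hu] at h2; exact absurd h2 (by simp)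
  have all := ae_all_iff.2 key
  filter_upwards [all] with u hu
  by_contra hcon
  push_neg at hcon
  obtain ⟨q, hq0, hq1, hq2⟩ := ENNReal.lt_iff_exists_rat_btwn.1 hcon
  have hq' : s - m < (q : ℝ) := by
    have := hq1
    rw [show ((Real.toNNReal (q : ℝ)) : ℝ≥0∞) = ENNReal.ofReal (q : ℝ) from rfl] at this
    exact (ENNReal.ofReal_lt_ofReal_iff_of_nonneg hsm.le).1 this
  have := hu ⟨q, hq'⟩
  rw [show ((Real.toNNReal (q : ℝ)) : ℝ≥0∞) = ENNReal.ofReal (q : ℝ) from rfl] at hq2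
  exact absurd (lt_of_le_of_lt this hq2) (lt_irrefl _)
end

section
/- Let μ be a finite Borel measure on ℝⁿ with compact support and suppose the spherical average σ(μ)(r) = ∫_{S^{n−1}} |μ̂(rv)|² dσ^{n−1}(v) satisfies σ(μ)(r) ≤ C r^{−β} for all r > 1, where β > 0. Let ν be a finite Borel measure on ℝⁿ supported in the unit ball with ν(B(x,ρ)) ≤ ρ^s for all x, ρ, where s > n − β. Then ∫_{ℝⁿ} σ(μ)(|ξ|) |ν̂(ξ)|² dξ < ∞. -/
open MeasureTheory Metric Filter
open scoped ENNReal Topology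
open Real Complex

/-- The Fourier transform of a finite Borel measure `μ` on `ℝⁿ`. -/
noncomputable def fourierOfMeasure {n : ℕ} (μ : Measure (EuclideanSpace ℝ (Fin n)))
    (ξ : EuclideanSpace ℝ (Fin n)) : ℂ :=
  ∫ z, Complex.exp (-2 * Real.pi * Complex.I * ((inner ℝ ξ z : ℝ) : ℂ)) ∂μ

/-- The spherical average `σ(μ)(r) = ∫_{S^{n−1}} |μ̂(rv)|² dσ^{n−1}(v)`, where the surface
measure on the unit sphere is the one induced by Lebesgue measure. -/
noncomputable def sphAvg {n : ℕ} (μ : Measure (EuclideanSpace ℝ (Fin n))) (r : ℝ) : ℝ≥0∞ :=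
  ∫⁻ v : sphere (0 : EuclideanSpace ℝ (Fin n)) 1,
    (‖fourierOfMeasure μ (r • (v : EuclideanSpace ℝ (Fin n)))‖₊ : ℝ≥0∞) ^ 2
    ∂(volume : Measure (EuclideanSpace ℝ (Fin n))).toSphere


variable {n : ℕ}

lemma fourierOfMeasure_eq (μ : Measure (EuclideanSpace ℝ (Fin n))) :
    fourierOfMeasure μ = VectorFourier.fourierIntegral Real.fourierChar μ
      (innerₗ (EuclideanSpace ℝ (Fin n))) (fun _ => (1 : ℂ)) := by
  ext ξ
  rw [fourierOfMeasure, Real.vector_fourierIntegral_eq_integral_exp_smul]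
  congr 1 with z
  rw [smul_eq_mul, mul_one, innerₗ_apply_apply, real_inner_comm]
  push_cast
  ring_nf

lemma continuous_fourierOfMeasure (μ : Measure (EuclideanSpace ℝ (Fin n)))
    [IsFiniteMeasure μ] : Continuous (fourierOfMeasure μ) := by
  rw [fourierOfMeasure_eq]
  exact VectorFourier.fourierIntegral_continuous Real.continuous_fourierChar
    (by simpa using continuous_inner (𝕜 := ℝ) (E := EuclideanSpace ℝ (Fin n)))
    (integrable_const 1)

lemma norm_fourierOfMeasure_le (μ : Measure (EuclideanSpace ℝ (Fin n)))
    [IsFiniteMeasure μ] (ξ : EuclideanSpace ℝ (Fin n)) :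
    ‖fourierOfMeasure μ ξ‖ ≤ (μ Set.univ).toReal := by
  rw [fourierOfMeasure]
  calc ‖∫ z, Complex.exp (-2 * Real.pi * Complex.I * ((inner ℝ ξ z : ℝ) : ℂ)) ∂μ‖
      ≤ 1 * (μ Set.univ).toReal := by
        apply norm_integral_le_of_norm_le_const
        filter_upwards with z
        rw [Complex.norm_exp]
        simp
    _ = (μ Set.univ).toReal := one_mul _

lemma enorm_fourierOfMeasure_le (μ : Measure (EuclideanSpace ℝ (Fin n)))
    [IsFiniteMeasure μ] (ξ : EuclideanSpace ℝ (Fin n)) :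
    (‖fourierOfMeasure μ ξ‖₊ : ℝ≥0∞) ≤ μ Set.univ := by
  rw [← enorm_eq_nnnorm, ← ofReal_norm]
  calc ENNReal.ofReal ‖fourierOfMeasure μ ξ‖ ≤ ENNReal.ofReal (μ Set.univ).toReal :=
        ENNReal.ofReal_le_ofReal (norm_fourierOfMeasure_le μ ξ)
    _ = μ Set.univ := ENNReal.ofReal_toReal (measure_ne_top μ _)

lemma normSq_fourierOfMeasure (ν : Measure (EuclideanSpace ℝ (Fin n)))
    [IsFiniteMeasure ν] (ξ : EuclideanSpace ℝ (Fin n)) :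
    ((‖fourierOfMeasure ν ξ‖ ^ 2 : ℝ) : ℂ) =
      ∫ p : EuclideanSpace ℝ (Fin n) × EuclideanSpace ℝ (Fin n),
        Complex.exp (-2 * Real.pi * Complex.I * ((inner ℝ ξ (p.1 - p.2) : ℝ) : ℂ))
        ∂(ν.prod ν) := by
  have h1 : ∀ p : EuclideanSpace ℝ (Fin n) × EuclideanSpace ℝ (Fin n),
      Complex.exp (-2 * Real.pi * Complex.I * ((inner ℝ ξ (p.1 - p.2) : ℝ) : ℂ)) =
        Complex.exp (-2 * Real.pi * Complex.I * ((inner ℝ ξ p.1 : ℝ) : ℂ)) *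
        Complex.exp (-2 * Real.pi * Complex.I * (-((inner ℝ ξ p.2 : ℝ) : ℂ))) := by
    intro p
    rw [← Complex.exp_add, inner_sub_right]
    push_cast
    ring_nf
  simp_rw [h1]
  rw [integral_prod_mul (μ := ν) (ν := ν)
    (f := fun x => Complex.exp (-2 * Real.pi * Complex.I * ((inner ℝ ξ x : ℝ) : ℂ)))
    (g := fun y => Complex.exp (-2 * Real.pi * Complex.I * (-((inner ℝ ξ y : ℝ) : ℂ))))]
  have h2 : (∫ y, Complex.exp (-2 * Real.pi * Complex.I * (-((inner ℝ ξ y : ℝ) : ℂ))) ∂ν)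
      = (starRingEnd ℂ) (fourierOfMeasure ν ξ) := by
    rw [fourierOfMeasure, ← integral_conj]
    congr 1 with y
    rw [← Complex.exp_conj]
    congr 1
    simp only [map_mul, Complex.conj_I, Complex.conj_ofReal, map_neg, map_ofNat]
    ring
  have h3 : (∫ x, Complex.exp (-2 * Real.pi * Complex.I * ((inner ℝ ξ x : ℝ) : ℂ)) ∂ν)
      = fourierOfMeasure ν ξ := rfl
  rw [h2, h3, Complex.mul_conj]
  norm_cast
  rw [Complex.normSq_eq_norm_sq]

section Gauss
variable (ν : Measure (EuclideanSpace ℝ (Fin n))) [IsFiniteMeasure ν]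

local notation "E" => EuclideanSpace ℝ (Fin n)

lemma integrable_gauss {a : ℝ} (ha : 0 < a) : Integrable (fun ξ : E => Real.exp (-a * ‖ξ‖ ^ 2)) volume := by
  have h := (GaussianFourier.integrable_cexp_neg_mul_sq_norm_add
    (b := (a : ℂ)) (by simpa using ha) 0 (0 : E)).norm
  simpa [Complex.norm_exp, ← Complex.ofReal_pow] using h

lemma gaussian_identity {a : ℝ} (ha : 0 < a) :
    ∫ ξ : E, Real.exp (-a * ‖ξ‖ ^ 2) * ‖fourierOfMeasure ν ξ‖ ^ 2 =
      (Real.pi / a) ^ ((n : ℝ) / 2) *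
        ∫ p : E × E, Real.exp (-Real.pi ^ 2 * ‖p.1 - p.2‖ ^ 2 / a) ∂(ν.prod ν) := by
  set Φ : E × (E × E) → ℂ := fun q =>
    Complex.exp (-(a : ℂ) * (‖q.1‖ : ℂ) ^ 2) *
      Complex.exp (-2 * Real.pi * Complex.I * ((inner ℝ q.1 (q.2.1 - q.2.2) : ℝ) : ℂ)) with hΦ
  have hcont : Continuous Φ := by
    apply Continuous.mul
    · exact Complex.continuous_exp.comp (by fun_prop)
    · apply Complex.continuous_exp.comp
      apply Continuous.mul continuous_const
      apply Complex.continuous_ofReal.comp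
      exact continuous_inner.comp (continuous_fst.prodMk
        ((continuous_fst.comp continuous_snd).sub (continuous_snd.comp continuous_snd)))
  have hnorm : ∀ q : E × (E × E), ‖Φ q‖ = Real.exp (-a * ‖q.1‖ ^ 2) := by
    intro q
    rw [hΦ]
    simp only [norm_mul, Complex.norm_exp]
    have h1 : (-(a : ℂ) * (‖q.1‖ : ℂ) ^ 2).re = -a * ‖q.1‖ ^ 2 := by
      have : (-(a : ℂ) * (‖q.1‖ : ℂ) ^ 2) = ((-a * ‖q.1‖ ^ 2 : ℝ) : ℂ) := by push_cast; ring
      rw [this, Complex.ofReal_re]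
    have h2 : (-2 * (Real.pi : ℂ) * Complex.I * ((inner ℝ q.1 (q.2.1 - q.2.2) : ℝ) : ℂ)).re = 0 := by
      simp
    rw [h1, h2, Real.exp_zero, mul_one]
  have hint : Integrable Φ (volume.prod (ν.prod ν)) := by
    rw [integrable_prod_iff hcont.aestronglyMeasurable]
    constructor
    · filter_upwards with ξ
      apply Integrable.mono' (integrable_const (Real.exp (-a * ‖ξ‖ ^ 2)))
        (hcont.comp (Continuous.prodMk_right ξ)).aestronglyMeasurable
      filter_upwards with p
      exact le_of_eq (hnorm (ξ, p))
    · have heq : ∀ ξ : E, ∫ p, ‖Φ (ξ, p)‖ ∂(ν.prod ν) =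
          Real.exp (-a * ‖ξ‖ ^ 2) * ((ν.prod ν) Set.univ).toReal := by
        intro ξ
        simp_rw [fun p => hnorm (ξ, p)]
        rw [integral_const, smul_eq_mul, mul_comm, measureReal_def]
      simp_rw [heq]
      exact (integrable_gauss ha).mul_const _
  -- Complexify
  have kc : (∫ ξ : E, ((Real.exp (-a * ‖ξ‖ ^ 2) * ‖fourierOfMeasure ν ξ‖ ^ 2 : ℝ) : ℂ)) =
      ∫ p : E × E, (((Real.pi / a) ^ ((n : ℝ) / 2) *
        Real.exp (-Real.pi ^ 2 * ‖p.1 - p.2‖ ^ 2 / a) : ℝ) : ℂ) ∂(ν.prod ν) := by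
    have h1 : ∀ ξ : E, ((Real.exp (-a * ‖ξ‖ ^ 2) * ‖fourierOfMeasure ν ξ‖ ^ 2 : ℝ) : ℂ) =
        ∫ p, Φ (ξ, p) ∂(ν.prod ν) := by
      intro ξ
      rw [hΦ]
      simp only
      rw [integral_const_mul, Complex.ofReal_mul, normSq_fourierOfMeasure ν ξ]
      congr 1
      rw [Complex.ofReal_exp]
      congr 1
      push_cast
      ring
    simp_rw [h1]
    rw [integral_integral_swap hint]
    have h2 : ∀ p : E × E, (∫ ξ : E, Φ (ξ, p)) =
        (((Real.pi / a) ^ ((n : ℝ) / 2) : ℝ) : ℂ) *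
          ((Real.exp (-Real.pi ^ 2 * ‖p.1 - p.2‖ ^ 2 / a) : ℝ) : ℂ) := by
      intro p
      have h3 : (∫ ξ : E, Φ (ξ, p)) =
          FourierTransform.fourier (fun v : E => Complex.exp (-(a : ℂ) * (‖v‖ : ℂ) ^ 2))
            (p.1 - p.2) := by
        rw [Real.fourier_eq']
        congr 1 with ξ
        rw [hΦ, smul_eq_mul]
        push_cast
        ring_nf
      rw [h3]
      have h4 := fourier_gaussian_innerProductSpace
        (b := (a : ℂ)) (by simpa using ha) (V := E) (p.1 - p.2)
      simp only [neg_mul] at h4 ⊢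
      rw [h4, finrank_euclideanSpace_fin]
      congr 1
      · rw [← Complex.ofReal_div, Complex.ofReal_cpow (by positivity)]
        push_cast
        ring_nf
      · rw [Complex.ofReal_exp]
        push_cast
        ring_nf
    simp_rw [h2]
    congr 1 with p
    push_cast
    ring
  have key : ((∫ ξ : E, Real.exp (-a * ‖ξ‖ ^ 2) * ‖fourierOfMeasure ν ξ‖ ^ 2 : ℝ) : ℂ) =
      ((∫ p : E × E, (Real.pi / a) ^ ((n : ℝ) / 2) *
        Real.exp (-Real.pi ^ 2 * ‖p.1 - p.2‖ ^ 2 / a) ∂(ν.prod ν) : ℝ) : ℂ) :=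
    integral_ofReal.symm.trans (kc.trans integral_ofReal)
  have key2 := Complex.ofReal_inj.mp key
  rw [key2, integral_const_mul]

end Gauss

set_option maxHeartbeats 1000000 in
lemma summable_aux (s : ℝ) :
    Summable (fun k : ℕ => Real.exp (-(Real.pi * (k : ℝ) ^ 2)) * ((k : ℝ) + 1) ^ s) := by
  set m := ⌈max s 0⌉₊ with hm
  set r := Real.exp (-Real.pi) with hrdef
  have hr0 : 0 < r := Real.exp_pos _
  have hr1 : r < 1 := by
    rw [hrdef, Real.exp_lt_one_iff]
    simpa using Real.pi_pos
  have h1 : Summable (fun k : ℕ => ((k : ℝ)) ^ m * r ^ k) :=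
    summable_pow_mul_geometric_of_norm_lt_one m
      (by rwa [Real.norm_eq_abs, abs_of_pos hr0])
  have h2 : Summable (fun k : ℕ => (((k + 1 : ℕ)) : ℝ) ^ m * r ^ (k + 1)) :=
    (summable_nat_add_iff 1).2 h1
  have hsum : Summable (fun k : ℕ => ((k : ℝ) + 1) ^ m * r ^ k) := by
    refine (h2.mul_left r⁻¹).congr fun k => ?_
    push_cast
    rw [pow_succ,
      show r⁻¹ * (((k : ℝ) + 1) ^ m * (r ^ k * r)) = (r⁻¹ * r) * (((k : ℝ) + 1) ^ m * r ^ k)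
        from by ring, inv_mul_cancel₀ hr0.ne', one_mul]
  refine Summable.of_nonneg_of_le (fun k => ?_) (fun k => ?_) hsum
  · positivity
  have hk1 : (1 : ℝ) ≤ (k : ℝ) + 1 := by
    have : (0 : ℝ) ≤ (k : ℝ) := Nat.cast_nonneg k
    linarith
  have hb1 : ((k : ℝ) + 1) ^ s ≤ ((k : ℝ) + 1) ^ m := by
    rw [← Real.rpow_natCast ((k : ℝ) + 1) m]
    exact Real.rpow_le_rpow_of_exponent_le hk1
      (le_trans (le_max_left s 0) (Nat.le_ceil _))
  have hb2 : Real.exp (-(Real.pi * (k : ℝ) ^ 2)) ≤ r ^ k := by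
    rw [hrdef, ← Real.exp_nat_mul, Real.exp_le_exp]
    have : (k : ℝ) ≤ (k : ℝ) ^ 2 := by
      rcases Nat.eq_zero_or_pos k with h | h
      · simp [h]
      · have : (1 : ℝ) ≤ (k : ℝ) := by exact_mod_cast h
        nlinarith
    nlinarith [Real.pi_pos]
  calc Real.exp (-(Real.pi * (k : ℝ) ^ 2)) * ((k : ℝ) + 1) ^ s
      ≤ r ^ k * ((k : ℝ) + 1) ^ m :=
        mul_le_mul hb2 hb1 (by positivity) (by positivity)
    _ = ((k : ℝ) + 1) ^ m * r ^ k := mul_comm _ _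

lemma kernel_bound (ν : Measure (EuclideanSpace ℝ (Fin n))) [IsFiniteMeasure ν] (s : ℝ)
    (hfr : ∀ (x : EuclideanSpace ℝ (Fin n)) (ρ : ℝ), 0 < ρ →
      ν (closedBall x ρ) ≤ ENNReal.ofReal (ρ ^ s))
    {R : ℝ} (hR : 1 ≤ R) (x : EuclideanSpace ℝ (Fin n)) :
    ∫⁻ y, ENNReal.ofReal (Real.exp (-(Real.pi * R ^ 2) * ‖x - y‖ ^ 2)) ∂ν ≤
      ENNReal.ofReal (R ^ (-s)) *
        ∑' k : ℕ, ENNReal.ofReal (Real.exp (-(Real.pi * (k : ℝ) ^ 2)) * ((k : ℝ) + 1) ^ s) := by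
  have hR0 : (0 : ℝ) < R := lt_of_lt_of_le one_pos hR
  set D : ℕ → Set (EuclideanSpace ℝ (Fin n)) :=
    fun k => closedBall x (((k : ℝ) + 1) / R) \ ball x ((k : ℝ) / R) with hD
  have hcover : (Set.univ : Set (EuclideanSpace ℝ (Fin n))) ⊆ ⋃ k, D k := by
    intro y _
    have hd : (0 : ℝ) ≤ dist y x * R := mul_nonneg dist_nonneg hR0.le
    refine Set.mem_iUnion.2 ⟨⌊dist y x * R⌋₊, ?_, ?_⟩
    · rw [mem_closedBall]
      rw [le_div_iff₀ hR0]
      have := Nat.lt_floor_add_one (dist y x * R)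
      linarith
    · rw [mem_ball]
      push_neg
      rw [div_le_iff₀ hR0]
      exact Nat.floor_le hd
  calc ∫⁻ y, ENNReal.ofReal (Real.exp (-(Real.pi * R ^ 2) * ‖x - y‖ ^ 2)) ∂ν
      = ∫⁻ y in Set.univ, ENNReal.ofReal (Real.exp (-(Real.pi * R ^ 2) * ‖x - y‖ ^ 2)) ∂ν := by
        rw [setLIntegral_univ]
    _ ≤ ∫⁻ y in ⋃ k, D k, ENNReal.ofReal (Real.exp (-(Real.pi * R ^ 2) * ‖x - y‖ ^ 2)) ∂ν :=
        lintegral_mono_set hcover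
    _ ≤ ∑' k : ℕ, ∫⁻ y in D k, ENNReal.ofReal (Real.exp (-(Real.pi * R ^ 2) * ‖x - y‖ ^ 2)) ∂ν :=
        lintegral_iUnion_le _ _
    _ ≤ ∑' k : ℕ, ENNReal.ofReal (Real.exp (-(Real.pi * (k : ℝ) ^ 2))) *
          ENNReal.ofReal ((((k : ℝ) + 1) / R) ^ s) := by
        refine ENNReal.tsum_le_tsum fun k => ?_
        have hptw : ∀ y ∈ D k,
            ENNReal.ofReal (Real.exp (-(Real.pi * R ^ 2) * ‖x - y‖ ^ 2)) ≤
              ENNReal.ofReal (Real.exp (-(Real.pi * (k : ℝ) ^ 2))) := by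
          intro y hy
          apply ENNReal.ofReal_le_ofReal
          rw [Real.exp_le_exp]
          have hyd : (k : ℝ) / R ≤ dist y x := by
            have := hy.2
            rw [mem_ball] at this
            linarith [not_lt.mp this]
          have hxy : ‖x - y‖ = dist y x := by rw [← dist_eq_norm, dist_comm]
          have h1 : ((k : ℝ) / R) ^ 2 ≤ ‖x - y‖ ^ 2 := by
            rw [hxy]
            apply pow_le_pow_left₀ (by positivity) hyd
          have h2 : Real.pi * R ^ 2 * ((k : ℝ) / R) ^ 2 = Real.pi * (k : ℝ) ^ 2 := by
            field_simp
          nlinarith [mul_le_mul_of_nonneg_left h1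
            (by positivity : (0 : ℝ) ≤ Real.pi * R ^ 2), h2]
        calc ∫⁻ y in D k, ENNReal.ofReal (Real.exp (-(Real.pi * R ^ 2) * ‖x - y‖ ^ 2)) ∂ν
            ≤ ∫⁻ _ in D k, ENNReal.ofReal (Real.exp (-(Real.pi * (k : ℝ) ^ 2))) ∂ν :=
              setLIntegral_mono measurable_const hptw
          _ = ENNReal.ofReal (Real.exp (-(Real.pi * (k : ℝ) ^ 2))) * ν (D k) := by
              rw [setLIntegral_const]
          _ ≤ ENNReal.ofReal (Real.exp (-(Real.pi * (k : ℝ) ^ 2))) *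
                ENNReal.ofReal ((((k : ℝ) + 1) / R) ^ s) := by
              apply mul_le_mul_right
              calc ν (D k) ≤ ν (closedBall x (((k : ℝ) + 1) / R)) :=
                    measure_mono Set.diff_subset
                _ ≤ ENNReal.ofReal ((((k : ℝ) + 1) / R) ^ s) :=
                    hfr x _ (by positivity)
    _ = ENNReal.ofReal (R ^ (-s)) *
          ∑' k : ℕ, ENNReal.ofReal (Real.exp (-(Real.pi * (k : ℝ) ^ 2)) * ((k : ℝ) + 1) ^ s) := by
        rw [← ENNReal.tsum_mul_left]
        congr 1 with k
        rw [← ENNReal.ofReal_mul (Real.exp_pos _).le,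
          ← ENNReal.ofReal_mul (by positivity : (0 : ℝ) ≤ R ^ (-s))]
        congr 1
        rw [Real.div_rpow (by positivity) hR0.le, Real.rpow_neg hR0.le]
        ring

set_option maxHeartbeats 1000000 in
lemma ball_L2_bound (ν : Measure (EuclideanSpace ℝ (Fin n))) [IsFiniteMeasure ν] (s : ℝ)
    (hfr : ∀ (x : EuclideanSpace ℝ (Fin n)) (ρ : ℝ), 0 < ρ →
      ν (closedBall x ρ) ≤ ENNReal.ofReal (ρ ^ s)) :
    ∃ c : ℝ≥0∞, c ≠ ⊤ ∧ ∀ R : ℝ, 1 ≤ R →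
      ∫⁻ ξ : EuclideanSpace ℝ (Fin n),
          ENNReal.ofReal (Real.exp (-(Real.pi / R ^ 2) * ‖ξ‖ ^ 2)) *
            (‖fourierOfMeasure ν ξ‖₊ : ℝ≥0∞) ^ 2 ≤
        c * ENNReal.ofReal (R ^ ((n : ℝ) - s)) := by
  set S : ℝ≥0∞ :=
    ∑' k : ℕ, ENNReal.ofReal (Real.exp (-(Real.pi * (k : ℝ) ^ 2)) * ((k : ℝ) + 1) ^ s) with hS
  have hSfin : S ≠ ⊤ := by
    rw [hS, ← ENNReal.ofReal_tsum_of_nonneg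
      (fun k => mul_nonneg (Real.exp_pos _).le (Real.rpow_nonneg (by positivity) _))
      (summable_aux s)]
    exact ENNReal.ofReal_ne_top
  refine ⟨ν Set.univ * S, ENNReal.mul_ne_top (measure_ne_top ν _) hSfin, fun R hR => ?_⟩
  have hR0 : (0 : ℝ) < R := lt_of_lt_of_le one_pos hR
  set a : ℝ := Real.pi / R ^ 2 with ha
  have ha0 : 0 < a := by positivity
  -- step 1 : rewrite integrand
  have hpt : ∀ ξ : EuclideanSpace ℝ (Fin n),
      ENNReal.ofReal (Real.exp (-a * ‖ξ‖ ^ 2)) * (‖fourierOfMeasure ν ξ‖₊ : ℝ≥0∞) ^ 2 =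
        ENNReal.ofReal (Real.exp (-a * ‖ξ‖ ^ 2) * ‖fourierOfMeasure ν ξ‖ ^ 2) := by
    intro ξ
    rw [ENNReal.ofReal_mul (Real.exp_pos _).le, ENNReal.ofReal_pow (norm_nonneg _),
      ofReal_norm, enorm_eq_nnnorm]
  simp_rw [hpt]
  -- step 2 : integrability
  have hg_int : Integrable
      (fun ξ : EuclideanSpace ℝ (Fin n) =>
        Real.exp (-a * ‖ξ‖ ^ 2) * ‖fourierOfMeasure ν ξ‖ ^ 2) volume := by
    apply Integrable.mono' ((integrable_gauss ha0).mul_const ((ν Set.univ).toReal ^ 2))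
    · exact ((Real.continuous_exp.comp (by fun_prop)).mul
        (((continuous_fourierOfMeasure ν).norm.pow 2))).aestronglyMeasurable
    · filter_upwards with ξ
      rw [Real.norm_eq_abs, _root_.abs_of_nonneg (by positivity : (0:ℝ) ≤ _)]
      apply mul_le_mul_of_nonneg_left _ (Real.exp_pos _).le
      exact pow_le_pow_left₀ (norm_nonneg _) (norm_fourierOfMeasure_le ν ξ) 2
  rw [← ofReal_integral_eq_lintegral_ofReal hg_int
    (Filter.Eventually.of_forall fun ξ => by positivity)]
  rw [gaussian_identity ν ha0]
  -- constants
  have hπa : Real.pi / a = R ^ 2 := by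
    rw [ha]; field_simp
  have hc1 : (Real.pi / a) ^ ((n : ℝ) / 2) = R ^ (n : ℝ) := by
    rw [hπa, ← Real.rpow_natCast R 2, ← Real.rpow_mul hR0.le]
    congr 1
    push_cast
    ring
  have hker : ∀ w : ℝ, -Real.pi ^ 2 * w / a = -(Real.pi * R ^ 2) * w := by
    intro w; rw [ha]; field_simp
  simp_rw [hker, hc1]
  -- kernel integral
  have hker_cont : Continuous (fun p : EuclideanSpace ℝ (Fin n) × EuclideanSpace ℝ (Fin n) =>
      Real.exp (-(Real.pi * R ^ 2) * ‖p.1 - p.2‖ ^ 2)) := by fun_prop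
  have hker_int : Integrable
      (fun p : EuclideanSpace ℝ (Fin n) × EuclideanSpace ℝ (Fin n) =>
        Real.exp (-(Real.pi * R ^ 2) * ‖p.1 - p.2‖ ^ 2)) (ν.prod ν) := by
    apply Integrable.mono' (integrable_const 1) hker_cont.aestronglyMeasurable
    filter_upwards with p
    rw [Real.norm_eq_abs, _root_.abs_of_nonneg (Real.exp_pos _).le]
    apply Real.exp_le_one_iff.2
    have : (0 : ℝ) ≤ Real.pi * R ^ 2 * ‖p.1 - p.2‖ ^ 2 := by positivity
    linarith
  rw [ENNReal.ofReal_mul (by positivity), ofReal_integral_eq_lintegral_ofReal hker_int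
    (Filter.Eventually.of_forall fun p => (Real.exp_pos _).le)]
  -- Fubini for lintegral
  rw [MeasureTheory.lintegral_prod
    (fun p : EuclideanSpace ℝ (Fin n) × EuclideanSpace ℝ (Fin n) =>
      ENNReal.ofReal (Real.exp (-(Real.pi * R ^ 2) * ‖p.1 - p.2‖ ^ 2)))
    ((ENNReal.continuous_ofReal.comp hker_cont).measurable.aemeasurable)]
  calc ENNReal.ofReal (R ^ (n : ℝ)) *
        ∫⁻ x, ∫⁻ y, ENNReal.ofReal (Real.exp (-(Real.pi * R ^ 2) * ‖x - y‖ ^ 2)) ∂ν ∂ν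
      ≤ ENNReal.ofReal (R ^ (n : ℝ)) *
        ∫⁻ _, ENNReal.ofReal (R ^ (-s)) * S ∂ν := by
        apply mul_le_mul_right
        exact lintegral_mono fun x => kernel_bound ν s hfr hR x
    _ = ENNReal.ofReal (R ^ (n : ℝ)) * (ENNReal.ofReal (R ^ (-s)) * S * ν Set.univ) := by
        rw [lintegral_const]
    _ = (ENNReal.ofReal (R ^ (n : ℝ)) * ENNReal.ofReal (R ^ (-s))) * (ν Set.univ * S) := by
        ring
    _ = ENNReal.ofReal (R ^ ((n : ℝ) - s)) * (ν Set.univ * S) := by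
        rw [← ENNReal.ofReal_mul (by positivity), ← Real.rpow_add hR0, sub_eq_add_neg]
    _ = ν Set.univ * S * ENNReal.ofReal (R ^ ((n : ℝ) - s)) := mul_comm _ _


set_option maxHeartbeats 1000000 in
/-- If `μ` has compact support and `σ(μ)(r) ≤ C r^{−β}` for `r > 1`, and `ν` is supported in
the unit ball with `ν(B(x,ρ)) ≤ ρ^s` where `s > n − β`, then
`∫ σ(μ)(|ξ|)|ν̂(ξ)|² dξ < ∞`. -/
theorem stmt13 {n : ℕ} (β s : ℝ) (hβ : 0 < β) (hs : (n : ℝ) - β < s)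
    (μ ν : Measure (EuclideanSpace ℝ (Fin n))) [IsFiniteMeasure μ] [IsFiniteMeasure ν]
    (K : Set (EuclideanSpace ℝ (Fin n))) (hK : IsCompact K) (hμK : μ Kᶜ = 0)
    (C : ℝ≥0∞) (hC : C ≠ ⊤)
    (hσ : ∀ r : ℝ, 1 < r → sphAvg μ r ≤ C * ENNReal.ofReal (r ^ (-β)))
    (hνs : ν (closedBall (0 : EuclideanSpace ℝ (Fin n)) 1)ᶜ = 0)
    (hfr : ∀ (x : EuclideanSpace ℝ (Fin n)) (ρ : ℝ), 0 < ρ →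
      ν (closedBall x ρ) ≤ ENNReal.ofReal (ρ ^ s)) :
    ∫⁻ ξ, sphAvg μ ‖ξ‖ * (‖fourierOfMeasure ν ξ‖₊ : ℝ≥0∞) ^ 2 < ⊤ := by
  obtain ⟨c, hc_fin, hA⟩ := ball_L2_bound ν s hfr
  set F : EuclideanSpace ℝ (Fin n) → ℝ≥0∞ :=
    fun ξ => sphAvg μ ‖ξ‖ * (‖fourierOfMeasure ν ξ‖₊ : ℝ≥0∞) ^ 2 with hF
  -- global bound on sphAvg
  set M : ℝ≥0∞ :=
    (volume : Measure (EuclideanSpace ℝ (Fin n))).toSphere Set.univ * (μ Set.univ) ^ 2 with hMdef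
  have hsph : ∀ r : ℝ, sphAvg μ r ≤ M := by
    intro r
    rw [sphAvg]
    calc ∫⁻ v : sphere (0 : EuclideanSpace ℝ (Fin n)) 1,
          (‖fourierOfMeasure μ (r • (v : EuclideanSpace ℝ (Fin n)))‖₊ : ℝ≥0∞) ^ 2
          ∂(volume : Measure (EuclideanSpace ℝ (Fin n))).toSphere
        ≤ ∫⁻ _ : sphere (0 : EuclideanSpace ℝ (Fin n)) 1, (μ Set.univ) ^ 2
          ∂(volume : Measure (EuclideanSpace ℝ (Fin n))).toSphere :=
          lintegral_mono fun v => pow_le_pow_left' (enorm_fourierOfMeasure_le μ _) 2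
      _ = M := by rw [lintegral_const, hMdef]; ring
  have hMfin : M ≠ ⊤ :=
    ENNReal.mul_ne_top (measure_ne_top _ _) (ENNReal.pow_ne_top (measure_ne_top μ _))
  have hνfin : ((ν Set.univ) ^ 2 : ℝ≥0∞) ≠ ⊤ := ENNReal.pow_ne_top (measure_ne_top ν _)
  set T : Set (EuclideanSpace ℝ (Fin n)) := {ξ | 1 < ‖ξ‖} with hTdef
  have hT : MeasurableSet T := (isOpen_lt continuous_const continuous_norm).measurableSet
  have hsplit := lintegral_add_compl F hT (μ := volume)
  rw [← hsplit]
  apply ENNReal.add_lt_top.2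
  constructor
  · -- tail part
    set A : ℕ → Set (EuclideanSpace ℝ (Fin n)) :=
      fun j => {ξ | (2 : ℝ) ^ j ≤ ‖ξ‖ ∧ ‖ξ‖ ≤ (2 : ℝ) ^ (j + 1)} ∩ T with hAdef
    have hTsub : T ⊆ ⋃ j, A j := by
      intro ξ hξ
      have hξ1 : (1 : ℝ) < ‖ξ‖ := hξ
      have hξ0 : (0 : ℝ) < ‖ξ‖ := lt_trans one_pos hξ1
      set L := Real.logb 2 ‖ξ‖ with hL
      have hL0 : 0 ≤ L := Real.logb_nonneg (by norm_num) hξ1.le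
      have h2L : (2 : ℝ) ^ L = ‖ξ‖ := Real.rpow_logb (by norm_num) (by norm_num) hξ0
      refine Set.mem_iUnion.2 ⟨⌊L⌋₊, ⟨?_, ?_⟩, hξ⟩
      · calc (2 : ℝ) ^ (⌊L⌋₊) = (2 : ℝ) ^ ((⌊L⌋₊ : ℝ)) := (Real.rpow_natCast 2 _).symm
          _ ≤ (2 : ℝ) ^ L := Real.rpow_le_rpow_of_exponent_le (by norm_num) (Nat.floor_le hL0)
          _ = ‖ξ‖ := h2L
      · calc ‖ξ‖ = (2 : ℝ) ^ L := h2L.symm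
          _ ≤ (2 : ℝ) ^ ((⌊L⌋₊ + 1 : ℕ) : ℝ) := by
              apply Real.rpow_le_rpow_of_exponent_le (by norm_num)
              push_cast
              exact (Nat.lt_floor_add_one L).le
          _ = (2 : ℝ) ^ (⌊L⌋₊ + 1) := Real.rpow_natCast 2 _
    -- per-annulus bound
    have hj : ∀ j : ℕ, ∫⁻ ξ in A j, F ξ ≤
        (C * ENNReal.ofReal (Real.exp Real.pi) * c) *
          ENNReal.ofReal (((2 : ℝ) ^ j) ^ (-β) * ((2 : ℝ) ^ (j + 1)) ^ ((n : ℝ) - s)) := by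
      intro j
      set R : ℝ := (2 : ℝ) ^ (j + 1) with hRdef
      have hR1 : (1 : ℝ) ≤ R := by
        rw [hRdef]
        calc (1 : ℝ) = 1 ^ (j + 1) := (one_pow _).symm
          _ ≤ 2 ^ (j + 1) := pow_le_pow_left₀ (by norm_num) (by norm_num) _
      have h2j : (0 : ℝ) < (2 : ℝ) ^ j := by positivity
      have hptw : ∀ ξ ∈ A j, F ξ ≤
          (C * ENNReal.ofReal (((2 : ℝ) ^ j) ^ (-β)) * ENNReal.ofReal (Real.exp Real.pi)) *
            (ENNReal.ofReal (Real.exp (-(Real.pi / R ^ 2) * ‖ξ‖ ^ 2)) *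
              (‖fourierOfMeasure ν ξ‖₊ : ℝ≥0∞) ^ 2) := by
        intro ξ hξ
        obtain ⟨⟨hlo, hhi⟩, hξT⟩ := hξ
        have hξ1 : (1 : ℝ) < ‖ξ‖ := hξT
        have h1 : sphAvg μ ‖ξ‖ ≤ C * ENNReal.ofReal (((2 : ℝ) ^ j) ^ (-β)) := by
          refine (hσ ‖ξ‖ hξ1).trans ?_
          apply mul_le_mul_right
          apply ENNReal.ofReal_le_ofReal
          rw [Real.rpow_neg (by positivity), Real.rpow_neg h2j.le]
          exact inv_anti₀ (Real.rpow_pos_of_pos h2j β)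
            (Real.rpow_le_rpow h2j.le hlo hβ.le)
        have h2 : (1 : ℝ≥0∞) ≤
            ENNReal.ofReal (Real.exp Real.pi) *
              ENNReal.ofReal (Real.exp (-(Real.pi / R ^ 2) * ‖ξ‖ ^ 2)) := by
          rw [← ENNReal.ofReal_mul (Real.exp_pos _).le, ← Real.exp_add]
          refine ENNReal.one_le_ofReal.2 (Real.one_le_exp ?_)
          have hR0 : (0 : ℝ) < R := lt_of_lt_of_le one_pos hR1
          have hsq : ‖ξ‖ ^ 2 ≤ R ^ 2 := by
            apply pow_le_pow_left₀ (norm_nonneg _) hhi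
          have : Real.pi / R ^ 2 * ‖ξ‖ ^ 2 ≤ Real.pi := by
            rw [div_mul_eq_mul_div, div_le_iff₀ (by positivity)]
            nlinarith [Real.pi_pos]
          linarith
        calc F ξ = sphAvg μ ‖ξ‖ * (‖fourierOfMeasure ν ξ‖₊ : ℝ≥0∞) ^ 2 := rfl
          _ ≤ (C * ENNReal.ofReal (((2 : ℝ) ^ j) ^ (-β))) *
              ((ENNReal.ofReal (Real.exp Real.pi) *
                ENNReal.ofReal (Real.exp (-(Real.pi / R ^ 2) * ‖ξ‖ ^ 2))) *
                (‖fourierOfMeasure ν ξ‖₊ : ℝ≥0∞) ^ 2) := by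
            apply mul_le_mul' h1
            exact le_mul_of_one_le_left zero_le h2
          _ = (C * ENNReal.ofReal (((2 : ℝ) ^ j) ^ (-β)) * ENNReal.ofReal (Real.exp Real.pi)) *
            (ENNReal.ofReal (Real.exp (-(Real.pi / R ^ 2) * ‖ξ‖ ^ 2)) *
              (‖fourierOfMeasure ν ξ‖₊ : ℝ≥0∞) ^ 2) := by ring
      calc ∫⁻ ξ in A j, F ξ
          ≤ ∫⁻ ξ in A j,
            (C * ENNReal.ofReal (((2 : ℝ) ^ j) ^ (-β)) * ENNReal.ofReal (Real.exp Real.pi)) *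
              (ENNReal.ofReal (Real.exp (-(Real.pi / R ^ 2) * ‖ξ‖ ^ 2)) *
                (‖fourierOfMeasure ν ξ‖₊ : ℝ≥0∞) ^ 2) := by
            refine setLIntegral_mono' ?_ hptw
            have : A j = ({ξ : EuclideanSpace ℝ (Fin n) | (2 : ℝ) ^ j ≤ ‖ξ‖} ∩
                {ξ : EuclideanSpace ℝ (Fin n) | ‖ξ‖ ≤ (2 : ℝ) ^ (j + 1)}) ∩ T := by
              rw [hAdef, ← Set.setOf_and]
            rw [this]
            exact (((isClosed_le continuous_const continuous_norm).measurableSet).inter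
              ((isClosed_le continuous_norm continuous_const).measurableSet)).inter hT
        _ = (C * ENNReal.ofReal (((2 : ℝ) ^ j) ^ (-β)) * ENNReal.ofReal (Real.exp Real.pi)) *
            ∫⁻ ξ in A j, ENNReal.ofReal (Real.exp (-(Real.pi / R ^ 2) * ‖ξ‖ ^ 2)) *
              (‖fourierOfMeasure ν ξ‖₊ : ℝ≥0∞) ^ 2 := by
            rw [lintegral_const_mul' _ _
              (by finiteness)]
        _ ≤ (C * ENNReal.ofReal (((2 : ℝ) ^ j) ^ (-β)) * ENNReal.ofReal (Real.exp Real.pi)) *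
            ∫⁻ ξ, ENNReal.ofReal (Real.exp (-(Real.pi / R ^ 2) * ‖ξ‖ ^ 2)) *
              (‖fourierOfMeasure ν ξ‖₊ : ℝ≥0∞) ^ 2 := by
            apply mul_le_mul_right
            exact setLIntegral_le_lintegral _ _
        _ ≤ (C * ENNReal.ofReal (((2 : ℝ) ^ j) ^ (-β)) * ENNReal.ofReal (Real.exp Real.pi)) *
            (c * ENNReal.ofReal (R ^ ((n : ℝ) - s))) := mul_le_mul_right (hA R hR1) _
        _ = (C * ENNReal.ofReal (Real.exp Real.pi) * c) *
            (ENNReal.ofReal (((2 : ℝ) ^ j) ^ (-β)) * ENNReal.ofReal (R ^ ((n : ℝ) - s))) := by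
            ring
        _ = (C * ENNReal.ofReal (Real.exp Real.pi) * c) *
            ENNReal.ofReal (((2 : ℝ) ^ j) ^ (-β) * ((2 : ℝ) ^ (j + 1)) ^ ((n : ℝ) - s)) := by
            rw [← ENNReal.ofReal_mul (by positivity)]
    -- geometric series
    set t : ℝ := (2 : ℝ) ^ ((n : ℝ) - s - β) with htdef
    have ht0 : 0 ≤ t := (Real.rpow_pos_of_pos (by norm_num) _).le
    have ht1 : t < 1 := Real.rpow_lt_one_of_one_lt_of_neg (by norm_num) (by linarith)
    have hrw : ∀ j : ℕ, ((2 : ℝ) ^ j) ^ (-β) * ((2 : ℝ) ^ (j + 1)) ^ ((n : ℝ) - s) =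
        (2 : ℝ) ^ ((n : ℝ) - s) * t ^ j := by
      intro j
      rw [htdef, ← Real.rpow_natCast (2 : ℝ) j, ← Real.rpow_natCast (2 : ℝ) (j + 1),
        ← Real.rpow_mul (by norm_num), ← Real.rpow_mul (by norm_num),
        ← Real.rpow_add (by norm_num),
        ← Real.rpow_natCast ((2 : ℝ) ^ ((n : ℝ) - s - β)) j,
        ← Real.rpow_mul (by norm_num), ← Real.rpow_add (by norm_num)]
      congr 1
      push_cast
      ring
    calc ∫⁻ ξ in T, F ξ ≤ ∫⁻ ξ in ⋃ j, A j, F ξ := lintegral_mono_set hTsub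
      _ ≤ ∑' j, ∫⁻ ξ in A j, F ξ := lintegral_iUnion_le _ _
      _ ≤ ∑' j : ℕ, (C * ENNReal.ofReal (Real.exp Real.pi) * c) *
            ENNReal.ofReal (((2 : ℝ) ^ j) ^ (-β) * ((2 : ℝ) ^ (j + 1)) ^ ((n : ℝ) - s)) :=
          ENNReal.tsum_le_tsum hj
      _ = (C * ENNReal.ofReal (Real.exp Real.pi) * c) * ENNReal.ofReal ((2 : ℝ) ^ ((n : ℝ) - s)) *
            ∑' j : ℕ, (ENNReal.ofReal t) ^ j := by
          rw [← ENNReal.tsum_mul_left]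
          congr 1 with j
          rw [hrw j, ENNReal.ofReal_mul (by positivity), ENNReal.ofReal_pow ht0]
          ring
      _ < ⊤ := by
          rw [ENNReal.tsum_geometric]
          apply ENNReal.mul_lt_top
          · apply ENNReal.mul_lt_top
            · exact ENNReal.mul_lt_top (ENNReal.mul_lt_top hC.lt_top ENNReal.ofReal_lt_top)
                hc_fin.lt_top
            · exact ENNReal.ofReal_lt_top
          · exact ENNReal.inv_lt_top.2 (tsub_pos_of_lt (ENNReal.ofReal_lt_one.2 ht1))
  · -- ball part
    have hTc : Tᶜ = closedBall (0 : EuclideanSpace ℝ (Fin n)) 1 := by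
      ext ξ
      simp [hTdef, mem_closedBall, dist_zero_right, not_lt]
    calc ∫⁻ ξ in Tᶜ, F ξ ≤ ∫⁻ _ in Tᶜ, M * (ν Set.univ) ^ 2 := by
          apply setLIntegral_mono' hT.compl
          intro ξ _
          exact mul_le_mul' (hsph _) (pow_le_pow_left' (enorm_fourierOfMeasure_le ν _) 2)
      _ = M * (ν Set.univ) ^ 2 * volume Tᶜ := setLIntegral_const _ _
      _ < ⊤ := by
          rw [hTc]
          exact ENNReal.mul_lt_top (ENNReal.mul_lt_top hMfin.lt_top hνfin.lt_top)
            measure_closedBall_lt_top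
end
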